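/- The Eicker–Huber–White (HC0) covariance estimator of β̂2 from the full regression equals that from the partial regression: the (2,2) block of (X'X)^{-1}X' diag(ε̂²) X(X'X)^{-1} equals (X̃2'X̃2)^{-1}X̃2' diag(ε̃²) X̃2(X̃2'X̃2)^{-1}, where ε̂ = (I-H)Y and ε̃ = (I-H̃2)(I-H1)Y. -/

import Mathlib

open Matrix

theorem stmt_8 {n K L : ℕ}
    (X1 : Matrix (Fin n) (Fin K) ℝ) (X2 : Matrix (Fin n) (Fin L) ℝ) (Y : Fin n → ℝ)
    (X : Matrix (Fin n) (Fin K ⊕ Fin L) ℝ) (hX : X = Matrix.fromCols X1 X2)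
    (H : Matrix (Fin n) (Fin n) ℝ) (hH : H = X * (Xᵀ * X)⁻¹ * Xᵀ)
    (H1 : Matrix (Fin n) (Fin n) ℝ) (hH1 : H1 = X1 * (X1ᵀ * X1)⁻¹ * X1ᵀ)
    (X2t : Matrix (Fin n) (Fin L) ℝ) (hX2t : X2t = (1 - H1) * X2)
    (H2t : Matrix (Fin n) (Fin n) ℝ) (hH2t : H2t = X2t * (X2tᵀ * X2t)⁻¹ * X2tᵀ)
    (epsHat : Fin n → ℝ) (hepsHat : epsHat = (1 - H) *ᵥ Y)
    (epsTilde : Fin n → ℝ) (hepsTilde : epsTilde = (1 - H2t) *ᵥ ((1 - H1) *ᵥ Y))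
    (hGX : IsUnit (Xᵀ * X)) (hG1 : IsUnit (X1ᵀ * X1)) (hG2 : IsUnit (X2tᵀ * X2t)) :
    ((Xᵀ * X)⁻¹ * Xᵀ * Matrix.diagonal (fun i => epsHat i ^ 2) * X * (Xᵀ * X)⁻¹).toBlocks₂₂
      = (X2tᵀ * X2t)⁻¹ * X2tᵀ * Matrix.diagonal (fun i => epsTilde i ^ 2) * X2t
          * (X2tᵀ * X2t)⁻¹ := by
  have hdX : IsUnit (Xᵀ * X).det := (Matrix.isUnit_iff_isUnit_det _).mp hGX
  have hd1 : IsUnit (X1ᵀ * X1).det := (Matrix.isUnit_iff_isUnit_det _).mp hG1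
  have hd2 : IsUnit (X2tᵀ * X2t).det := (Matrix.isUnit_iff_isUnit_det _).mp hG2
  have hsymX : ((Xᵀ * X)⁻¹)ᵀ = (Xᵀ * X)⁻¹ := by
    rw [Matrix.transpose_nonsing_inv, Matrix.transpose_mul, Matrix.transpose_transpose]
  have hsym1 : ((X1ᵀ * X1)⁻¹)ᵀ = (X1ᵀ * X1)⁻¹ := by
    rw [Matrix.transpose_nonsing_inv, Matrix.transpose_mul, Matrix.transpose_transpose]
  have hsym2 : ((X2tᵀ * X2t)⁻¹)ᵀ = (X2tᵀ * X2t)⁻¹ := by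
    rw [Matrix.transpose_nonsing_inv, Matrix.transpose_mul, Matrix.transpose_transpose]
  have hH1T : H1ᵀ = H1 := by
    rw [hH1, Matrix.transpose_mul, Matrix.transpose_mul, Matrix.transpose_transpose,
      hsym1, Matrix.mul_assoc]
  have hH1idem : H1 * H1 = H1 := by
    rw [hH1]
    calc X1 * (X1ᵀ * X1)⁻¹ * X1ᵀ * (X1 * (X1ᵀ * X1)⁻¹ * X1ᵀ)
        = X1 * (X1ᵀ * X1)⁻¹ * ((X1ᵀ * X1) * ((X1ᵀ * X1)⁻¹ * X1ᵀ)) := by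
          simp only [Matrix.mul_assoc]
      _ = X1 * (X1ᵀ * X1)⁻¹ * X1ᵀ := by
          rw [Matrix.mul_nonsing_inv_cancel_left (A := X1ᵀ * X1) _ hd1]
  have hH1X2t : H1 * X2t = 0 := by
    rw [hX2t, ← Matrix.mul_assoc, Matrix.mul_sub, Matrix.mul_one, hH1idem, sub_self,
      Matrix.zero_mul]
  have hQX2t : (1 - H1) * X2t = X2t := by
    rw [Matrix.sub_mul, Matrix.one_mul, hH1X2t, sub_zero]
  have hX2tQ : X2tᵀ * (1 - H1) = X2tᵀ := by
    have := congrArg Matrix.transpose hQX2t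
    rwa [Matrix.transpose_mul, Matrix.transpose_sub, Matrix.transpose_one, hH1T] at this
  have hX2tTH1 : X2tᵀ * H1 = 0 := by
    have := congrArg Matrix.transpose hH1X2t
    rwa [Matrix.transpose_mul, hH1T, Matrix.transpose_zero] at this
  have hX2eq : X2tᵀ * X2 = X2tᵀ * X2t := by
    have h' := congrArg (fun M => X2tᵀ * M) hX2t
    rw [h', ← Matrix.mul_assoc, hX2tQ]
  have hX2TQ : X2ᵀ * (1 - H1) = X2tᵀ := by
    rw [hX2t, Matrix.transpose_mul, Matrix.transpose_sub, Matrix.transpose_one, hH1T]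
  set M2 : Matrix (Fin L) (Fin n) ℝ := (X2tᵀ * X2t)⁻¹ * X2tᵀ with hM2
  set M1 : Matrix (Fin K) (Fin n) ℝ := (X1ᵀ * X1)⁻¹ * X1ᵀ * (1 - X2 * M2) with hM1
  have hblock1 : X1ᵀ * X1 * M1 + X1ᵀ * X2 * M2 = X1ᵀ := by
    calc X1ᵀ * X1 * M1 + X1ᵀ * X2 * M2
        = (X1ᵀ * X1) * ((X1ᵀ * X1)⁻¹ * (X1ᵀ * (1 - X2 * M2))) + X1ᵀ * X2 * M2 := by
          rw [hM1]; simp only [Matrix.mul_assoc]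
      _ = X1ᵀ * (1 - X2 * M2) + X1ᵀ * X2 * M2 := by
          rw [Matrix.mul_nonsing_inv_cancel_left (A := X1ᵀ * X1) _ hd1]
      _ = X1ᵀ := by
          simp only [Matrix.mul_sub, Matrix.mul_one, Matrix.mul_assoc]; abel
  have hblock2 : X2ᵀ * X1 * M1 + X2ᵀ * X2 * M2 = X2ᵀ := by
    calc X2ᵀ * X1 * M1 + X2ᵀ * X2 * M2
        = X2ᵀ * H1 * (1 - X2 * M2) + X2ᵀ * X2 * M2 := by
          rw [hM1, hH1]; simp only [Matrix.mul_assoc]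
      _ = X2ᵀ * H1 + (X2ᵀ * (1 - H1)) * (X2 * M2) := by
          simp only [Matrix.mul_sub, Matrix.sub_mul, Matrix.mul_one, Matrix.one_mul,
            Matrix.mul_assoc]
          abel
      _ = X2ᵀ * H1 + (X2tᵀ * X2) * M2 := by rw [hX2TQ, Matrix.mul_assoc]
      _ = X2ᵀ * H1 + (X2tᵀ * X2t) * ((X2tᵀ * X2t)⁻¹ * X2tᵀ) := by rw [hX2eq, hM2]
      _ = X2ᵀ * H1 + X2tᵀ := by rw [Matrix.mul_nonsing_inv_cancel_left (A := X2tᵀ * X2t) _ hd2]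
      _ = X2ᵀ := by rw [← hX2TQ, Matrix.mul_sub, Matrix.mul_one]; abel
  have hfull : (Xᵀ * X) * Matrix.fromRows M1 M2 = Xᵀ := by
    rw [hX, Matrix.transpose_fromCols, Matrix.fromRows_mul_fromCols,
      Matrix.fromBlocks_mul_fromRows, hblock1, hblock2]
  have hMeq : (Xᵀ * X)⁻¹ * Xᵀ = Matrix.fromRows M1 M2 := by
    have h' := congrArg (fun B => (Xᵀ * X)⁻¹ * B) hfull
    rw [Matrix.nonsing_inv_mul_cancel_left (A := Xᵀ * X) _ hdX] at h'
    exact h'.symm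
  have hMT : X * (Xᵀ * X)⁻¹ = (Matrix.fromRows M1 M2)ᵀ := by
    rw [← hMeq, Matrix.transpose_mul, Matrix.transpose_transpose, hsymX]
  have e1 : X1 * M1 = H1 - H1 * (X2 * M2) := by
    rw [hM1, hH1]
    simp only [Matrix.mul_sub, Matrix.mul_one, Matrix.mul_assoc]
  have e2 : H2t = X2 * M2 - H1 * (X2 * M2) := by
    rw [hH2t, Matrix.mul_assoc, ← hM2, hX2t, Matrix.sub_mul, Matrix.one_mul,
      Matrix.sub_mul, Matrix.mul_assoc]
  have hHsum : H = H1 + H2t := by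
    rw [hH, Matrix.mul_assoc, hMeq, hX, Matrix.fromCols_mul_fromRows, e1, e2]
    abel
  have hH2tH1 : H2t * H1 = 0 := by
    rw [hH2t]
    simp only [Matrix.mul_assoc]
    rw [hX2tTH1, Matrix.mul_zero, Matrix.mul_zero]
  have hResid : 1 - H = (1 - H2t) * (1 - H1) := by
    simp only [Matrix.sub_mul, Matrix.mul_sub, Matrix.mul_one, Matrix.one_mul]
    rw [hH2tH1, sub_zero, hHsum]
    abel
  have hEps : epsHat = epsTilde := by
    rw [hepsHat, hepsTilde, Matrix.mulVec_mulVec, ← hResid]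
  rw [hEps, hMeq,
    Matrix.mul_assoc (Matrix.fromRows M1 M2 * Matrix.diagonal fun i => epsTilde i ^ 2) X
      ((Xᵀ * X)⁻¹), hMT, Matrix.transpose_fromRows, Matrix.fromRows_mul,
    Matrix.fromRows_mul_fromCols, Matrix.toBlocks_fromBlocks₂₂, hM2,
    Matrix.transpose_mul, Matrix.transpose_transpose, hsym2]
  simp only [Matrix.mul_assoc]
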